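/- Let n ≥ 2, m ≥ 1, δ₁, δ₂ ∈ [0,1/2), y, z ∈ ℝ^m, and q, r ∈ ℤ^n \ {0} with q not parallel to r (i.e., q and r are linearly independent over ℝ). Define A(q,δ₁) = {x ∈ [0,1)^{nm} : ∃p ∈ ℤ^m, |qx - p - y| < δ₁} and A(r,δ₂) = {x ∈ [0,1)^{nm} : ∃s ∈ ℤ^m, |rx - s - z| < δ₂}. Then |A(q,δ₁) ∩ A(r,δ₂)| = |A(q,δ₁)|·|A(r,δ₂)|. -/

import Mathlib

open MeasureTheory Set

namespace Stmt12Aux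

lemma mk_weighted_sum {n : ℕ} (c : Fin n → ℤ) (w : Fin n → ℝ) :
    (∑ i, c i • ((w i : ℝ) : AddCircle (1:ℝ))) = ((∑ i, (c i : ℝ) * w i : ℝ) : AddCircle (1:ℝ)) := by
  have h : ∀ i, c i • ((w i : ℝ) : AddCircle (1:ℝ)) = (((c i : ℝ) * w i : ℝ) : AddCircle (1:ℝ)) := by
    intro i
    rw [← zsmul_eq_mul]
    exact (map_zsmul (QuotientAddGroup.mk' (AddSubgroup.zmultiples (1:ℝ))) (c i) (w i)).symm
  simp_rw [h]
  exact (map_sum (QuotientAddGroup.mk' (AddSubgroup.zmultiples (1:ℝ))) _ _).symm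

lemma norm_iff (s a δ : ℝ) :
    ‖((s : AddCircle (1:ℝ))) - (a : AddCircle (1:ℝ))‖ < δ ↔ ∃ p : ℤ, |s - p - a| < δ := by
  have h1 : ((s : AddCircle (1:ℝ))) - (a : AddCircle (1:ℝ)) = ((s - a : ℝ) : AddCircle (1:ℝ)) :=
    (map_sub (QuotientAddGroup.mk' (AddSubgroup.zmultiples (1:ℝ))) s a).symm
  rw [h1]
  have h2 : ‖((s - a : ℝ) : AddCircle (1:ℝ))‖ = |(s - a) - round (s - a)| := by
    rw [AddCircle.norm_eq]; simp
  rw [h2]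
  constructor
  · intro h
    exact ⟨round (s - a), by
      rw [show s - (round (s-a) : ℝ) - a = (s - a) - round (s - a) by ring]; exact h⟩
  · rintro ⟨p, hp⟩
    refine lt_of_le_of_lt (round_le (s - a) p) ?_
    rw [show (s - a) - (p:ℝ) = s - p - a by ring]
    exact hp

lemma pi_restrict {ι : Type*} [Fintype ι] {α : ι → Type*} [∀ i, MeasurableSpace (α i)]
    (μ : ∀ i, Measure (α i)) [∀ i, SigmaFinite (μ i)] (s : ∀ i, Set (α i))
    (_hs : ∀ i, MeasurableSet (s i)) :
    Measure.pi (fun i => (μ i).restrict (s i)) = (Measure.pi μ).restrict (Set.pi univ s) := by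
  refine (Measure.pi_eq fun t ht => ?_)
  rw [Measure.restrict_apply (MeasurableSet.univ_pi ht), ← Set.pi_inter_distrib, Measure.pi_pi]
  exact Finset.prod_congr rfl fun i _ => (Measure.restrict_apply (ht i)).symm

lemma map_volume_eq {G H : Type*}
    [MeasureSpace G] [AddCommGroup G] [TopologicalSpace G] [IsTopologicalAddGroup G]
    [BorelSpace G] [IsProbabilityMeasure (volume : Measure G)]
    [Measure.IsAddHaarMeasure (volume : Measure G)]
    [MeasureSpace H] [AddCommGroup H] [TopologicalSpace H] [IsTopologicalAddGroup H]
    [BorelSpace H] [LocallyCompactSpace H] [IsProbabilityMeasure (volume : Measure H)]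
    [Measure.IsAddHaarMeasure (volume : Measure H)]
    (φ : G →+ H) (hc : Continuous φ) (hs : Function.Surjective φ) :
    Measure.map φ volume = volume := by
  haveI : Measure.IsAddHaarMeasure (Measure.map φ volume) :=
    Measure.isAddHaarMeasure_map_of_isFiniteMeasure volume φ hc hs
  haveI : IsProbabilityMeasure (Measure.map φ volume) :=
    Measure.isProbabilityMeasure_map hc.measurable.aemeasurable
  exact Measure.isAddHaarMeasure_eq_of_isProbabilityMeasure _ _

lemma hyperplane_null {n m : ℕ} (i : Fin n) (j : Fin m) (c : ℝ) :
    volume {x : Fin n → Fin m → ℝ | x i j = c} = 0 := by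
  have h0 : (volume : Measure (Fin m → ℝ)) (Function.eval j ⁻¹' {c}) = 0 :=
    Measure.pi_eval_preimage_null _ (measure_singleton c)
  have : {x : Fin n → Fin m → ℝ | x i j = c} = Function.eval i ⁻¹' (Function.eval j ⁻¹' {c}) := rfl
  rw [this]
  exact Measure.pi_eval_preimage_null _ h0

lemma box_ae {n m : ℕ} :
    ({x : Fin n → Fin m → ℝ | ∀ i j, x i j ∈ Ico (0:ℝ) 1} : Set (Fin n → Fin m → ℝ))
      =ᵐ[volume] (Set.pi univ fun _ : Fin n => Set.pi univ fun _ : Fin m => Ioc (0:ℝ) 1) := by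
  rw [MeasureTheory.ae_eq_set]
  constructor
  · refine measure_mono_null (fun x hx => ?_)
      (measure_iUnion_null fun i : Fin n => measure_iUnion_null fun j : Fin m =>
        hyperplane_null i j 0)
    obtain ⟨hs, ht⟩ := hx
    simp only [mem_univ_pi, mem_Ioc, not_forall] at ht
    obtain ⟨i, j, hij⟩ := ht
    have h1 := hs i j
    simp only [mem_Ico] at h1
    have : x i j = 0 := by
      rcases not_and_or.1 hij with h | h
      · linarith [h1.1, not_lt.1 h]
      · exact absurd (le_of_lt h1.2) h
    exact mem_iUnion.2 ⟨i, mem_iUnion.2 ⟨j, this⟩⟩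
  · refine measure_mono_null (fun x hx => ?_)
      (measure_iUnion_null fun i : Fin n => measure_iUnion_null fun j : Fin m =>
        hyperplane_null i j 1)
    obtain ⟨hs, ht⟩ := hx
    simp only [mem_setOf_eq, not_forall] at ht
    obtain ⟨i, j, hij⟩ := ht
    have h1 := hs i (mem_univ i) j (mem_univ j)
    simp only [mem_Ioc] at h1
    have : x i j = 1 := by
      simp only [mem_Ico] at hij
      rcases not_and_or.1 hij with h | h
      · linarith [h1.1, not_le.1 h]
      · linarith [h1.2, not_lt.1 h]
    exact mem_iUnion.2 ⟨i, mem_iUnion.2 ⟨j, this⟩⟩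

lemma vol_box_preimage {n m : ℕ} (S : Set (Fin n → Fin m → AddCircle (1:ℝ)))
    (hS : MeasurableSet S) :
    volume ({x : Fin n → Fin m → ℝ | ∀ i j, x i j ∈ Ico (0:ℝ) 1} ∩
      (fun (x : Fin n → Fin m → ℝ) (i : Fin n) (j : Fin m) =>
        ((x i j : ℝ) : AddCircle (1:ℝ))) ⁻¹' S) = volume S := by
  haveI : BorelSpace (Fin n → Fin m → AddCircle (1:ℝ)) := Pi.borelSpace
  have hmk : MeasurePreserving ((↑) : ℝ → AddCircle (1:ℝ))
      (volume.restrict (Ioc (0:ℝ) 1)) volume := by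
    simpa using AddCircle.measurePreserving_mk (T := (1:ℝ)) 0
  have hin : MeasurePreserving (fun (a : Fin m → ℝ) (j : Fin m) => ((a j : ℝ) : AddCircle (1:ℝ)))
      (Measure.pi fun _ => volume.restrict (Ioc (0:ℝ) 1)) volume :=
    measurePreserving_pi _ _ fun _ => hmk
  have hout : MeasurePreserving
      (fun (x : Fin n → Fin m → ℝ) (i : Fin n) (j : Fin m) => ((x i j : ℝ) : AddCircle (1:ℝ)))
      (Measure.pi fun _ : Fin n => Measure.pi fun _ : Fin m => volume.restrict (Ioc (0:ℝ) 1))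
      volume :=
    measurePreserving_pi _ _ fun _ => hin
  have hΦc : Continuous (fun (x : Fin n → Fin m → ℝ) (i : Fin n) (j : Fin m) =>
      ((x i j : ℝ) : AddCircle (1:ℝ))) :=
    continuous_pi fun i => continuous_pi fun j =>
      (AddCircle.continuous_mk' 1).comp ((continuous_apply j).comp (continuous_apply i))
  have hS' : MeasurableSet ((fun (x : Fin n → Fin m → ℝ) (i : Fin n) (j : Fin m) =>
      ((x i j : ℝ) : AddCircle (1:ℝ))) ⁻¹' S) := hΦc.measurable hS
  have h1 : (Measure.pi fun _ : Fin m => (volume : Measure ℝ).restrict (Ioc (0:ℝ) 1))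
      = (volume : Measure (Fin m → ℝ)).restrict (Set.pi univ fun _ => Ioc (0:ℝ) 1) :=
    pi_restrict _ _ (fun _ => measurableSet_Ioc)
  have h2 : (Measure.pi fun _ : Fin n => Measure.pi fun _ : Fin m =>
        (volume : Measure ℝ).restrict (Ioc (0:ℝ) 1))
      = (volume : Measure (Fin n → Fin m → ℝ)).restrict
          (Set.pi univ fun _ : Fin n => Set.pi univ fun _ : Fin m => Ioc (0:ℝ) 1) := by
    simp_rw [h1]
    exact pi_restrict (fun _ : Fin n => (volume : Measure (Fin m → ℝ))) _
      (fun _ => MeasurableSet.univ_pi fun _ => measurableSet_Ioc)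
  have key := hout.measure_preimage hS.nullMeasurableSet
  rw [h2, Measure.restrict_apply hS'] at key
  rw [← key]
  exact (measure_congr (MeasureTheory.ae_eq_set_inter box_ae
    (Filter.EventuallyEq.refl _ _))).trans (by rw [inter_comm])

end Stmt12Aux

open Stmt12Aux in
theorem stmt12 (n m : ℕ) (hn : 2 ≤ n) (hm : 1 ≤ m)
    (δ₁ δ₂ : ℝ) (hδ₁0 : 0 ≤ δ₁) (hδ₁ : δ₁ < 1/2) (hδ₂0 : 0 ≤ δ₂) (hδ₂ : δ₂ < 1/2)
    (y z : Fin m → ℝ) (q r : Fin n → ℤ) (hq : q ≠ 0) (hr : r ≠ 0)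
    (hind : LinearIndependent ℝ ![fun i => (q i : ℝ), fun i => (r i : ℝ)]) :
    volume ({x : Fin n → Fin m → ℝ | (∀ i j, x i j ∈ Set.Ico (0:ℝ) 1) ∧
        ∃ p : Fin m → ℤ, ∀ j, |(∑ i, (q i : ℝ) * x i j) - p j - y j| < δ₁} ∩
      {x : Fin n → Fin m → ℝ | (∀ i j, x i j ∈ Set.Ico (0:ℝ) 1) ∧
        ∃ s : Fin m → ℤ, ∀ j, |(∑ i, (r i : ℝ) * x i j) - s j - z j| < δ₂}) =
    volume {x : Fin n → Fin m → ℝ | (∀ i j, x i j ∈ Set.Ico (0:ℝ) 1) ∧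
        ∃ p : Fin m → ℤ, ∀ j, |(∑ i, (q i : ℝ) * x i j) - p j - y j| < δ₁} *
    volume {x : Fin n → Fin m → ℝ | (∀ i j, x i j ∈ Set.Ico (0:ℝ) 1) ∧
        ∃ s : Fin m → ℤ, ∀ j, |(∑ i, (r i : ℝ) * x i j) - s j - z j| < δ₂} := by
  classical
  -- instances
  haveI ibG : BorelSpace (Fin n → Fin m → AddCircle (1:ℝ)) := Pi.borelSpace
  haveI ipT : IsProbabilityMeasure (volume : Measure (AddCircle (1:ℝ))) :=
    ⟨by simp [AddCircle.measure_univ]⟩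
  haveI ihH : Measure.IsAddHaarMeasure
      (volume : Measure ((Fin m → AddCircle (1:ℝ)) × (Fin m → AddCircle (1:ℝ)))) :=
    Measure.prod.instIsAddHaarMeasure _ _
  haveI ihG : Measure.IsAddHaarMeasure (volume : Measure (Fin n → Fin m → AddCircle (1:ℝ))) :=
    Measure.pi.isAddHaarMeasure _
  -- the projection map
  set Φ : (Fin n → Fin m → ℝ) → (Fin n → Fin m → AddCircle (1:ℝ)) :=
    fun x i j => ((x i j : ℝ) : AddCircle (1:ℝ)) with hΦdef
  -- the frequency homomorphism
  set φ : (Fin n → Fin m → AddCircle (1:ℝ)) →+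
      (Fin m → AddCircle (1:ℝ)) × (Fin m → AddCircle (1:ℝ)) :=
    { toFun := fun x => (fun j => ∑ i, q i • x i j, fun j => ∑ i, r i • x i j)
      map_zero' := by
        refine Prod.ext ?_ ?_ <;> funext j <;> simp
      map_add' := fun a b => by
        refine Prod.ext ?_ ?_ <;> funext j <;>
          simp [Finset.sum_add_distrib, smul_add] } with hφdef
  have hterm : ∀ (c : Fin n → ℤ),
      Continuous (fun (x : Fin n → Fin m → AddCircle (1:ℝ)) (j : Fin m) => ∑ i, c i • x i j) := by
    intro c
    refine continuous_pi fun j => continuous_finset_sum _ fun i _ => ?_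
    exact Continuous.zsmul ((continuous_apply j).comp (continuous_apply i)) (c i)
  have hφc : Continuous φ := Continuous.prodMk (hterm q) (hterm r)
  -- a nonvanishing 2x2 minor
  obtain ⟨i0, k0, hd⟩ : ∃ i k, (q i : ℝ) * (r k : ℝ) - (q k : ℝ) * (r i : ℝ) ≠ 0 := by
    by_contra hcon
    push_neg at hcon
    rw [linearIndependent_fin2] at hind
    obtain ⟨hr0, hqr⟩ := hind
    simp only [Matrix.cons_val_one, Matrix.head_cons, Matrix.cons_val_zero] at hr0 hqr
    have hrex : ∃ k, (r k : ℝ) ≠ 0 := by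
      by_contra h'
      push_neg at h'
      exact hr0 (funext h')
    obtain ⟨k, hk⟩ := hrex
    apply hqr ((q k : ℝ) / (r k : ℝ))
    funext i
    have h1 := hcon i k
    have h2 : (q i : ℝ) * (r k : ℝ) = (q k : ℝ) * (r i : ℝ) := by linarith
    show (q k : ℝ) / (r k : ℝ) * (r i : ℝ) = (q i : ℝ)
    field_simp
    linarith
  -- surjectivity of φ
  have hmksur : Function.Surjective ((↑) : ℝ → AddCircle (1:ℝ)) :=
    QuotientAddGroup.mk'_surjective _
  have hφs : Function.Surjective φ := by
    rintro ⟨t, s⟩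
    choose α hα using fun j => hmksur (t j)
    choose β hβ using fun j => hmksur (s j)
    set d : ℝ := (q i0 : ℝ) * (r k0 : ℝ) - (q k0 : ℝ) * (r i0 : ℝ) with hddef
    set u : Fin m → ℝ := fun j => (α j * r k0 - β j * q k0) / d with hudef
    set v : Fin m → ℝ := fun j => (β j * q i0 - α j * r i0) / d with hvdef
    set w : Fin n → Fin m → ℝ :=
      fun a j => (if a = i0 then u j else 0) + (if a = k0 then v j else 0) with hwdef
    have hsum : ∀ (c : Fin n → ℤ) (j : Fin m),
        (∑ i, (c i : ℝ) * w i j) = (c i0 : ℝ) * u j + (c k0 : ℝ) * v j := by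
      intro c j
      simp only [hwdef, mul_add, mul_ite, mul_zero, Finset.sum_add_distrib]
      rw [Finset.sum_ite_eq' Finset.univ i0 (fun a => (c a : ℝ) * u j),
        Finset.sum_ite_eq' Finset.univ k0 (fun a => (c a : ℝ) * v j)]
      simp
    refine ⟨fun a j => ((w a j : ℝ) : AddCircle (1:ℝ)), ?_⟩
    have hq1 : ∀ j, (∑ i, (q i : ℝ) * w i j) = α j := by
      intro j
      rw [hsum q j, hudef, hvdef]
      field_simp
      ring
    have hr1 : ∀ j, (∑ i, (r i : ℝ) * w i j) = β j := by
      intro j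
      rw [hsum r j, hudef, hvdef]
      field_simp
      ring
    refine Prod.ext ?_ ?_ <;> funext j
    · show (∑ i, q i • ((w i j : ℝ) : AddCircle (1:ℝ))) = t j
      rw [mk_weighted_sum, hq1 j, hα j]
    · show (∑ i, r i • ((w i j : ℝ) : AddCircle (1:ℝ))) = s j
      rw [mk_weighted_sum, hr1 j, hβ j]
  -- the target sets on the torus
  set U : Set (Fin m → AddCircle (1:ℝ)) :=
    {t | ∀ j, ‖t j - ((y j : ℝ) : AddCircle (1:ℝ))‖ < δ₁} with hUdef
  set V : Set (Fin m → AddCircle (1:ℝ)) :=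
    {t | ∀ j, ‖t j - ((z j : ℝ) : AddCircle (1:ℝ))‖ < δ₂} with hVdef
  have hUmeas : MeasurableSet U := by
    have : U = ⋂ j, (fun t : Fin m → AddCircle (1:ℝ) => t j) ⁻¹'
        Metric.ball ((y j : ℝ) : AddCircle (1:ℝ)) δ₁ := by
      ext t
      simp [hUdef, Metric.mem_ball, dist_eq_norm]
    rw [this]
    exact MeasurableSet.iInter fun j =>
      (Metric.isOpen_ball.preimage (continuous_apply j)).measurableSet
  have hVmeas : MeasurableSet V := by
    have : V = ⋂ j, (fun t : Fin m → AddCircle (1:ℝ) => t j) ⁻¹'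
        Metric.ball ((z j : ℝ) : AddCircle (1:ℝ)) δ₂ := by
      ext t
      simp [hVdef, Metric.mem_ball, dist_eq_norm]
    rw [this]
    exact MeasurableSet.iInter fun j =>
      (Metric.isOpen_ball.preimage (continuous_apply j)).measurableSet
  haveI ibH : BorelSpace ((Fin m → AddCircle (1:ℝ)) × (Fin m → AddCircle (1:ℝ))) :=
    Prod.borelSpace
  -- pushforward identity
  have hmap : Measure.map φ volume = volume := map_volume_eq φ hφc hφs
  have hA : ∀ (W : Set ((Fin m → AddCircle (1:ℝ)) × (Fin m → AddCircle (1:ℝ)))),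
      MeasurableSet W →
      volume ({x : Fin n → Fin m → ℝ | ∀ i j, x i j ∈ Ico (0:ℝ) 1} ∩ Φ ⁻¹' (⇑φ ⁻¹' W))
        = volume W := by
    intro W hW
    rw [vol_box_preimage _ (hφc.measurable hW), ← hmap,
      Measure.map_apply hφc.measurable hW]
  -- description of the three sets
  have skolem : ∀ {P : Fin m → ℤ → Prop},
      (∃ p : Fin m → ℤ, ∀ j, P j (p j)) ↔ ∀ j, ∃ c : ℤ, P j c :=
    fun {P} => ⟨fun ⟨p, h⟩ j => ⟨p j, h j⟩,
      fun h => ⟨fun j => (h j).choose, fun j => (h j).choose_spec⟩⟩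
  have hiffq : ∀ x : Fin n → Fin m → ℝ,
      (∃ p : Fin m → ℤ, ∀ j, |(∑ i, (q i : ℝ) * x i j) - p j - y j| < δ₁) ↔
        (φ (Φ x)).1 ∈ U := by
    intro x
    refine Iff.trans (skolem (P := fun j c => |(∑ i, (q i : ℝ) * x i j) - c - y j| < δ₁)) ?_
    refine forall_congr' fun j => Iff.symm ?_
    show ‖(∑ i, q i • ((x i j : ℝ) : AddCircle (1:ℝ))) - _‖ < δ₁ ↔ _
    rw [mk_weighted_sum, norm_iff]
  have hiffr : ∀ x : Fin n → Fin m → ℝ,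
      (∃ p : Fin m → ℤ, ∀ j, |(∑ i, (r i : ℝ) * x i j) - p j - z j| < δ₂) ↔
        (φ (Φ x)).2 ∈ V := by
    intro x
    refine Iff.trans (skolem (P := fun j c => |(∑ i, (r i : ℝ) * x i j) - c - z j| < δ₂)) ?_
    refine forall_congr' fun j => Iff.symm ?_
    show ‖(∑ i, r i • ((x i j : ℝ) : AddCircle (1:ℝ))) - _‖ < δ₂ ↔ _
    rw [mk_weighted_sum, norm_iff]
  have e2 : {x : Fin n → Fin m → ℝ | (∀ i j, x i j ∈ Set.Ico (0:ℝ) 1) ∧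
        ∃ p : Fin m → ℤ, ∀ j, |(∑ i, (q i : ℝ) * x i j) - p j - y j| < δ₁}
      = {x : Fin n → Fin m → ℝ | ∀ i j, x i j ∈ Ico (0:ℝ) 1} ∩ Φ ⁻¹' (⇑φ ⁻¹' (U ×ˢ univ)) := by
    ext x
    simp only [mem_setOf_eq, mem_inter_iff, mem_preimage, mem_prod, mem_univ, and_true]
    exact and_congr_right fun _ => hiffq x
  have e3 : {x : Fin n → Fin m → ℝ | (∀ i j, x i j ∈ Set.Ico (0:ℝ) 1) ∧
        ∃ s : Fin m → ℤ, ∀ j, |(∑ i, (r i : ℝ) * x i j) - s j - z j| < δ₂}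
      = {x : Fin n → Fin m → ℝ | ∀ i j, x i j ∈ Ico (0:ℝ) 1} ∩ Φ ⁻¹' (⇑φ ⁻¹' (univ ×ˢ V)) := by
    ext x
    simp only [mem_setOf_eq, mem_inter_iff, mem_preimage, mem_prod, mem_univ, true_and]
    exact and_congr_right fun _ => hiffr x
  have e1 : ({x : Fin n → Fin m → ℝ | ∀ i j, x i j ∈ Ico (0:ℝ) 1} ∩ Φ ⁻¹' (⇑φ ⁻¹' (U ×ˢ univ)))
      ∩ ({x : Fin n → Fin m → ℝ | ∀ i j, x i j ∈ Ico (0:ℝ) 1} ∩ Φ ⁻¹' (⇑φ ⁻¹' (univ ×ˢ V)))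
      = {x : Fin n → Fin m → ℝ | ∀ i j, x i j ∈ Ico (0:ℝ) 1} ∩ Φ ⁻¹' (⇑φ ⁻¹' (U ×ˢ V)) := by
    rw [inter_inter_inter_comm, inter_self, ← preimage_inter, ← preimage_inter,
      Set.prod_inter_prod, univ_inter, inter_univ]
  rw [e2, e3, e1, hA _ (hUmeas.prod hVmeas), hA _ (hUmeas.prod MeasurableSet.univ),
    hA _ (MeasurableSet.univ.prod hVmeas)]
  rw [Measure.volume_eq_prod, Measure.prod_prod, Measure.prod_prod, Measure.prod_prod,
    measure_univ, mul_one, one_mul]
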